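/- For any string w and position i with 1 ≤ i < |w|, if j = min { k > i : w[k..|w|] ≺ w[i..|w|] } exists, then w[i..j-1] is the longest Lyndon word starting at position i; that is, for every k ≥ j with k ≤ |w|, the substring w[i..k] is not a Lyndon word. -/
import Mathlib

/-- A string (list) is a Lyndon word w.r.t. the lexicographic order:
it is strictly smaller than every nonempty proper suffix. -/
def IsLyndon {α : Type*} [LinearOrder α] (w : List α) : Prop :=
  w ≠ [] ∧ ∀ i, 0 < i → i < w.length → List.Lex (· < ·) w (w.drop i)

/-- `substr w i j` is the substring `w[i..j]` (1-indexed, inclusive). -/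
def substr {α : Type*} (w : List α) (i j : ℕ) : List α :=
  (w.drop (i - 1)).take (j - i + 1)

lemma lex_ext {α : Type*} [LinearOrder α] : ∀ {x y : List α},
    List.Lex (· < ·) x y → ∀ A B : List α, x <+: A → y <+: B →
    y.length ≤ x.length → List.Lex (· < ·) A B := by
  intro x y h
  induction h with
  | nil => intro A B _ _ hlen; simp at hlen
  | @cons a l1 l2 h ih =>
      intro A B hA hB hlen
      obtain ⟨t, rfl⟩ := hA
      obtain ⟨s, rfl⟩ := hB
      simp only [List.cons_append]
      exact List.Lex.cons (ih _ _ (List.prefix_append _ _) (List.prefix_append _ _)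
        (by simpa using hlen))
  | @rel a b l1 l2 h =>
      intro A B hA hB _
      obtain ⟨t, rfl⟩ := hA
      obtain ⟨s, rfl⟩ := hB
      exact List.Lex.rel h

lemma lex_asymm {α : Type*} [LinearOrder α] {x y : List α}
    (h : List.Lex (· < ·) x y) (h' : List.Lex (· < ·) y x) : False := by
  induction h with
  | nil => cases h'
  | cons h ih => cases h' with
    | cons h' => exact ih h'
    | rel h' => exact lt_irrefl _ h'
  | rel h => cases h' with
    | cons _ => exact lt_irrefl _ h
    | rel h' => exact lt_irrefl _ (h.trans h')


theorem stmt2 {α : Type*} [LinearOrder α] (w : List α) (i j : ℕ)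
    (hi : 1 ≤ i) (hij : i < j) (hj : j ≤ w.length)
    (hlt : List.Lex (· < ·) (w.drop (j - 1)) (w.drop (i - 1)))
    (hmin : ∀ k, i < k → k < j → ¬ List.Lex (· < ·) (w.drop (k - 1)) (w.drop (i - 1))) :
    ∀ k, j ≤ k → k ≤ w.length → ¬ IsLyndon (substr w i k) := by
  intro k hjk hk ⟨hne, hlyn⟩
  have hlenu : (substr w i k).length = k - i + 1 := by
    rw [substr, List.length_take, List.length_drop]; omega
  have hdrop : (substr w i k).drop (j - i) = (w.drop (j - 1)).take (k - j + 1) := by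
    unfold substr
    rw [List.drop_take, List.drop_drop]
    have e1 : i - 1 + (j - i) = j - 1 := by omega
    have e2 : k - i + 1 - (j - i) = k - j + 1 := by omega
    rw [e1, e2]
  have h1 := hlyn (j - i) (by omega) (by omega)
  rw [hdrop] at h1
  have h2 : List.Lex (· < ·) (w.drop (i - 1)) (w.drop (j - 1)) := by
    refine lex_ext h1 _ _ (List.take_prefix _ _) (List.take_prefix _ _) ?_
    have := List.length_take_le (k - j + 1) (w.drop (j - 1))
    omega
  exact lex_asymm h2 hlt
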